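/- For 0 < p < 1/2, the sum over i ≥ 1 of i * binom(2i, i) * (p(1-p))^i * (1 - 2p)/(2(1-p)) equals p / (1 - 2p)^2. -/

import Mathlib

open Finset

lemma aux_catalan_rec (n : ℕ) : (n + 2) * catalan (n + 1) = (4 * n + 2) * catalan n := by
  have h1 := Nat.succ_mul_centralBinom_succ n
  have h2 := succ_mul_catalan_eq_centralBinom (n + 1)
  have h3 := succ_mul_catalan_eq_centralBinom n
  apply Nat.eq_of_mul_eq_mul_left (Nat.succ_pos n)
  calc (n + 1) * ((n + 2) * catalan (n + 1))
      = (n + 1) * ((n + 1 + 1) * catalan (n + 1)) := by ring_nf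
    _ = (n + 1) * Nat.centralBinom (n + 1) := by rw [h2]
    _ = 2 * (2 * n + 1) * Nat.centralBinom n := h1
    _ = 2 * (2 * n + 1) * ((n + 1) * catalan n) := by rw [h3]
    _ = (n + 1) * ((4 * n + 2) * catalan n) := by ring

lemma aux_cb_le_four (n : ℕ) : Nat.centralBinom n ≤ 4 ^ n := by
  calc Nat.centralBinom n = (2 * n).choose n := rfl
    _ ≤ (2 * n + 1).choose n := Nat.choose_le_choose n (by omega)
    _ ≤ 4 ^ n := Nat.choose_middle_le_pow n

lemma aux_cat_le_four (n : ℕ) : catalan n ≤ 4 ^ n := by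
  have h := succ_mul_catalan_eq_centralBinom n
  have : catalan n ≤ (n + 1) * catalan n := Nat.le_mul_of_pos_left _ (Nat.succ_pos n)
  exact le_trans (this.trans_eq h) (aux_cb_le_four n)

lemma aux_cat_le_four_real (n : ℕ) : (catalan n : ℝ) ≤ 4 ^ n := by
  exact_mod_cast aux_cat_le_four n

lemma aux_cb_le_four_real (n : ℕ) : (Nat.centralBinom n : ℝ) ≤ 4 ^ n := by
  exact_mod_cast aux_cb_le_four n

/-- Summability of `catalan n * t^n` for `0 ≤ t`, `4t < 1`. -/
lemma aux_summable_cat {t : ℝ} (ht0 : 0 ≤ t) (ht4 : 4 * t < 1) :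
    Summable (fun n : ℕ => (catalan n : ℝ) * t ^ n) := by
  apply Summable.of_nonneg_of_le (fun n => by positivity)
    (fun n => ?_) (summable_geometric_of_lt_one (by positivity) ht4)
  calc (catalan n : ℝ) * t ^ n ≤ 4 ^ n * t ^ n :=
        mul_le_mul_of_nonneg_right (aux_cat_le_four_real n) (by positivity)
    _ = (4 * t) ^ n := by rw [mul_pow]

set_option maxHeartbeats 1000000 in
lemma aux_cat_gf_eq {t : ℝ} (ht0 : 0 ≤ t) (ht4 : 4 * t < 1) :
    (∑' n : ℕ, (catalan n : ℝ) * t ^ n)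
      = 1 + t * (∑' n : ℕ, (catalan n : ℝ) * t ^ n) ^ 2 := by
  have hs := aux_summable_cat ht0 ht4
  have hnorm : Summable (fun n : ℕ => ‖(catalan n : ℝ) * t ^ n‖) := by
    refine hs.congr fun n => ?_
    rw [Real.norm_eq_abs, abs_of_nonneg (by positivity)]
  have hsq : (∑' n : ℕ, (catalan n : ℝ) * t ^ n) ^ 2
      = ∑' n : ℕ, (catalan (n + 1) : ℝ) * t ^ n := by
    rw [sq, tsum_mul_tsum_eq_tsum_sum_antidiagonal_of_summable_norm hnorm hnorm]
    refine tsum_congr fun n => ?_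
    have : ∀ kl ∈ antidiagonal n,
        ((catalan kl.1 : ℝ) * t ^ kl.1) * ((catalan kl.2 : ℝ) * t ^ kl.2)
          = ((catalan kl.1 * catalan kl.2 : ℕ) : ℝ) * t ^ n := by
      intro kl hkl
      rw [Finset.HasAntidiagonal.mem_antidiagonal] at hkl
      rw [← hkl]
      push_cast
      rw [pow_add]
      ring
    rw [Finset.sum_congr rfl this, ← Finset.sum_mul, ← Nat.cast_sum, ← catalan_succ']
  have hshift : Summable (fun n : ℕ => (catalan (n + 1) : ℝ) * t ^ (n + 1)) := by
    exact (summable_nat_add_iff 1).mpr hs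
  have h1 : (∑' n : ℕ, (catalan n : ℝ) * t ^ n)
      = 1 + ∑' n : ℕ, (catalan (n + 1) : ℝ) * t ^ (n + 1) := by
    rw [Summable.tsum_eq_zero_add hs]
    norm_num [catalan_zero]
  rw [hsq, h1]
  congr 1
  rw [← tsum_mul_left]
  refine tsum_congr fun n => ?_
  ring

lemma aux_summable_cb {x : ℝ} (hx0 : 0 ≤ x) (hx4 : 4 * x < 1) :
    Summable (fun n : ℕ => (Nat.centralBinom n : ℝ) * x ^ n) := by
  apply Summable.of_nonneg_of_le (fun n => by positivity) (fun n => ?_)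
    (summable_geometric_of_lt_one (by positivity) hx4)
  calc (Nat.centralBinom n : ℝ) * x ^ n ≤ 4 ^ n * x ^ n :=
        mul_le_mul_of_nonneg_right (aux_cb_le_four_real n) (by positivity)
    _ = (4 * x) ^ n := (mul_pow 4 x n).symm

lemma aux_summable_ncb {x : ℝ} (hx0 : 0 ≤ x) (hx4 : 4 * x < 1) :
    Summable (fun n : ℕ => (n : ℝ) * (Nat.centralBinom n : ℝ) * x ^ n) := by
  have hgeom : Summable (fun n : ℕ => (n : ℝ) ^ 1 * (4 * x) ^ n) :=
    summable_pow_mul_geometric_of_norm_lt_one 1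
      (by rw [Real.norm_eq_abs, abs_of_nonneg (by positivity)]; exact hx4)
  apply Summable.of_nonneg_of_le (fun n => by positivity) (fun n => ?_) hgeom
  calc (n : ℝ) * (Nat.centralBinom n : ℝ) * x ^ n
      ≤ (n : ℝ) * 4 ^ n * x ^ n := by
        apply mul_le_mul_of_nonneg_right _ (by positivity)
        exact mul_le_mul_of_nonneg_left (aux_cb_le_four_real n) (Nat.cast_nonneg n)
    _ = (n : ℝ) ^ 1 * (4 * x) ^ n := by rw [mul_pow]; ring

/-- Root selection: the Catalan generating function satisfies `2 x F - 1 < 0`. -/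
lemma aux_gf_neg {x : ℝ} (hx0 : 0 < x) (hx4 : 4 * x < 1) :
    2 * x * (∑' n : ℕ, (catalan n : ℝ) * x ^ n) - 1 < 0 := by
  set G : ℝ → ℝ := fun t => ∑' n : ℕ, (catalan n : ℝ) * t ^ n with hG
  have hsF : Summable (fun n : ℕ => (catalan n : ℝ) * x ^ n) := aux_summable_cat hx0.le hx4
  have hcont : ContinuousOn G (Set.Icc 0 x) := by
    refine continuousOn_tsum (fun i => ?_) hsF (fun n t ht => ?_)
    · exact (continuous_const.mul (continuous_pow i)).continuousOn
    · rw [Real.norm_eq_abs,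
        abs_of_nonneg (mul_nonneg (Nat.cast_nonneg _) (pow_nonneg ht.1 n))]
      exact mul_le_mul_of_nonneg_left (pow_le_pow_left₀ ht.1 ht.2 n) (Nat.cast_nonneg _)
  have hgcont : ContinuousOn (fun t => 2 * t * G t - 1) (Set.Icc 0 x) :=
    (((continuous_const.mul continuous_id).continuousOn.mul hcont).sub continuousOn_const)
  have hne : ∀ t ∈ Set.Icc (0:ℝ) x, (2 * t * G t - 1) ≠ 0 := by
    intro t ht h0'
    have h4t : 4 * t < 1 := by
      have := ht.2; nlinarith
    have hGt : G t = 1 + t * (G t) ^ 2 := aux_cat_gf_eq ht.1 h4t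
    have hs' : (2 * t * G t - 1) ^ 2 = 1 - 4 * t := by linear_combination (-4 * t) * hGt
    rw [h0'] at hs'
    nlinarith
  show 2 * x * G x - 1 < 0
  by_contra hcon
  push_neg at hcon
  have hg0 : 2 * (0:ℝ) * G 0 - 1 = -1 := by ring
  have hmem : (0:ℝ) ∈ Set.Icc (2 * (0:ℝ) * G 0 - 1) (2 * x * G x - 1) := by
    constructor
    · rw [hg0]; norm_num
    · exact hcon
  obtain ⟨t, htmem, h0'⟩ := intermediate_value_Icc hx0.le hgcont hmem
  exact hne t htmem h0'

/-- The equation `T - 1 = 4xT - 2xF`. -/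
lemma aux_T_eq {x : ℝ} (hx0 : 0 < x) (hx4 : 4 * x < 1) :
    (∑' n : ℕ, (Nat.centralBinom n : ℝ) * x ^ n) - 1
      = 4 * x * (∑' n : ℕ, (Nat.centralBinom n : ℝ) * x ^ n)
        - 2 * x * (∑' n : ℕ, (catalan n : ℝ) * x ^ n) := by
  have hsF : Summable (fun n : ℕ => (catalan n : ℝ) * x ^ n) := aux_summable_cat hx0.le hx4
  have hsT : Summable (fun n : ℕ => (Nat.centralBinom n : ℝ) * x ^ n) :=
    aux_summable_cb hx0.le hx4
  set F : ℝ := ∑' n : ℕ, (catalan n : ℝ) * x ^ n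
  set T : ℝ := ∑' n : ℕ, (Nat.centralBinom n : ℝ) * x ^ n
  have h1 : HasSum (fun n : ℕ => (Nat.centralBinom (n + 1) : ℝ) * x ^ (n + 1)) (T - 1) := by
    have := (hasSum_nat_add_iff' (f := fun n : ℕ => (Nat.centralBinom n : ℝ) * x ^ n) 1).mpr
      hsT.hasSum
    simpa [Nat.centralBinom_zero] using this
  have hfun : (fun n : ℕ => (Nat.centralBinom n : ℝ) * x ^ n - (catalan n : ℝ) * x ^ n)
      = fun n : ℕ => (n : ℝ) * (catalan n : ℝ) * x ^ n := by
    funext n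
    have hcast : (Nat.centralBinom n : ℝ) = ((n : ℝ) + 1) * (catalan n : ℝ) := by
      exact_mod_cast (succ_mul_catalan_eq_centralBinom n).symm
    rw [hcast]; ring
  have hsub : HasSum (fun n : ℕ => (n : ℝ) * (catalan n : ℝ) * x ^ n) (T - F) :=
    hfun ▸ (hsT.hasSum.sub hsF.hasSum)
  have h2 : HasSum (fun n : ℕ =>
      4 * x * ((n : ℝ) * (catalan n : ℝ) * x ^ n) + 2 * x * ((catalan n : ℝ) * x ^ n))
      (4 * x * (T - F) + 2 * x * F) :=
    (hsub.mul_left (4 * x)).add (hsF.hasSum.mul_left (2 * x))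
  have hfun2 : (fun n : ℕ =>
      4 * x * ((n : ℝ) * (catalan n : ℝ) * x ^ n) + 2 * x * ((catalan n : ℝ) * x ^ n))
      = fun n : ℕ => (Nat.centralBinom (n + 1) : ℝ) * x ^ (n + 1) := by
    funext n
    have hc : (Nat.centralBinom (n + 1) : ℝ) = ((n : ℝ) + 2) * (catalan (n + 1) : ℝ) := by
      exact_mod_cast (succ_mul_catalan_eq_centralBinom (n + 1)).symm
    have hrec' : ((n : ℝ) + 2) * (catalan (n + 1) : ℝ)
        = (4 * (n : ℝ) + 2) * (catalan n : ℝ) := by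
      exact_mod_cast aux_catalan_rec n
    rw [hc, hrec', pow_succ]
    ring
  have := h1.unique (hfun2 ▸ h2)
  linarith

/-- The equation `S = 4xS + 2xT`. -/
lemma aux_S_eq {x : ℝ} (hx0 : 0 < x) (hx4 : 4 * x < 1) :
    (∑' n : ℕ, (n : ℝ) * (Nat.centralBinom n : ℝ) * x ^ n)
      = 4 * x * (∑' n : ℕ, (n : ℝ) * (Nat.centralBinom n : ℝ) * x ^ n)
        + 2 * x * (∑' n : ℕ, (Nat.centralBinom n : ℝ) * x ^ n) := by
  have hsT : Summable (fun n : ℕ => (Nat.centralBinom n : ℝ) * x ^ n) :=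
    aux_summable_cb hx0.le hx4
  have hsS : Summable (fun n : ℕ => (n : ℝ) * (Nat.centralBinom n : ℝ) * x ^ n) :=
    aux_summable_ncb hx0.le hx4
  set T : ℝ := ∑' n : ℕ, (Nat.centralBinom n : ℝ) * x ^ n
  set S : ℝ := ∑' n : ℕ, (n : ℝ) * (Nat.centralBinom n : ℝ) * x ^ n
  have h1 : HasSum (fun n : ℕ =>
      ((n + 1 : ℕ) : ℝ) * (Nat.centralBinom (n + 1) : ℝ) * x ^ (n + 1)) S := by
    have := (hasSum_nat_add_iff'
      (f := fun n : ℕ => (n : ℝ) * (Nat.centralBinom n : ℝ) * x ^ n) 1).mpr hsS.hasSum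
    simpa using this
  have h2 : HasSum (fun n : ℕ =>
      4 * x * ((n : ℝ) * (Nat.centralBinom n : ℝ) * x ^ n)
        + 2 * x * ((Nat.centralBinom n : ℝ) * x ^ n))
      (4 * x * S + 2 * x * T) :=
    (hsS.hasSum.mul_left (4 * x)).add (hsT.hasSum.mul_left (2 * x))
  have hfun2 : (fun n : ℕ =>
      4 * x * ((n : ℝ) * (Nat.centralBinom n : ℝ) * x ^ n)
        + 2 * x * ((Nat.centralBinom n : ℝ) * x ^ n))
      = fun n : ℕ => ((n + 1 : ℕ) : ℝ) * (Nat.centralBinom (n + 1) : ℝ) * x ^ (n + 1) := by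
    funext n
    have hrec : ((n + 1 : ℕ) : ℝ) * (Nat.centralBinom (n + 1) : ℝ)
        = 2 * (2 * (n : ℝ) + 1) * (Nat.centralBinom n : ℝ) := by
      exact_mod_cast Nat.succ_mul_centralBinom_succ n
    rw [hrec, pow_succ]
    ring
  exact h1.unique (hfun2 ▸ h2)

theorem expected_one_ahead_index (p : ℝ) (h0 : 0 < p) (h2 : p < 1/2) :
    ∑' i : ℕ, (i : ℝ) * (Nat.centralBinom i : ℝ) * (p * (1 - p)) ^ i
        * ((1 - 2 * p) / (2 * (1 - p)))
      = p / (1 - 2 * p) ^ 2 := by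
  have hq : 0 < 1 - p := by linarith
  have h2p : 0 < 1 - 2 * p := by linarith
  have hx0 : 0 < p * (1 - p) := mul_pos h0 hq
  have hx4 : 4 * (p * (1 - p)) < 1 := by nlinarith [sq_nonneg (1 - 2 * p)]
  set F : ℝ := ∑' n : ℕ, (catalan n : ℝ) * (p * (1 - p)) ^ n with hFdef
  set T : ℝ := ∑' n : ℕ, (Nat.centralBinom n : ℝ) * (p * (1 - p)) ^ n with hTdef
  set S : ℝ := ∑' n : ℕ, (n : ℝ) * (Nat.centralBinom n : ℝ) * (p * (1 - p)) ^ n with hSdef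
  have hFx : 2 * (p * (1 - p)) * F = 2 * p := by
    have hneg := aux_gf_neg hx0 hx4
    have hGt : F = 1 + (p * (1 - p)) * F ^ 2 := aux_cat_gf_eq hx0.le hx4
    have hsq : (2 * (p * (1 - p)) * F - 1) ^ 2 = (1 - 2 * p) ^ 2 := by
      linear_combination (-4 * (p * (1 - p))) * hGt
    have hfac : ((2 * (p * (1 - p)) * F - 1) - (-(1 - 2 * p)))
        * ((2 * (p * (1 - p)) * F - 1) + (-(1 - 2 * p))) = 0 := by
      linear_combination hsq
    rcases mul_eq_zero.mp hfac with h | h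
    · have := sub_eq_zero.mp h
      linarith
    · exfalso
      rw [← hFdef] at hneg
      nlinarith
  have hT := aux_T_eq hx0 hx4
  have hS := aux_S_eq hx0 hx4
  rw [← hFdef, ← hTdef] at hT
  rw [← hTdef, ← hSdef] at hS
  -- T * (1 - 2p) = 1
  have hTval : T * (1 - 2 * p) = 1 := by
    have e1 : T * (1 - 2 * p) ^ 2 = 1 - 2 * p := by linarith [hT, hFx]
    refine mul_right_cancel₀ (b := 1 - 2 * p) h2p.ne' ?_
    calc T * (1 - 2 * p) * (1 - 2 * p) = T * (1 - 2 * p) ^ 2 := by ring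
      _ = 1 - 2 * p := e1
      _ = 1 * (1 - 2 * p) := by ring
  -- final computation
  have hgoal : (∑' i : ℕ, (i : ℝ) * (Nat.centralBinom i : ℝ) * (p * (1 - p)) ^ i
      * ((1 - 2 * p) / (2 * (1 - p)))) = S * ((1 - 2 * p) / (2 * (1 - p))) := by
    rw [hSdef, tsum_mul_right]
  rw [hgoal]
  have hS' : S * (1 - 2 * p) ^ 2 = 2 * (p * (1 - p)) * T := by nlinarith [hS]
  have key : S * (1 - 2 * p) ^ 3 = 2 * p * (1 - p) := by nlinarith [hS', hTval]
  field_simp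
  linear_combination key
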